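/- Let (F, ||·||_F) be a complex Banach space, V a bounded open sector centered at 0 in ℂ, q > 1 a real number and k ≥ 1 an integer. A holomorphic function f : V → F admits the null formal power series 0 ∈ F[[eps]] as its q-Gevrey asymptotic expansion of order 1/k if and only if for every open subsector U of V whose closure is contained in V ∪ {0}, there exist constants K ∈ ℝ and M > 0 such that ||f(eps)||_F ≤ M exp( −(k/(2 log q)) log^2 |eps| ) |eps|^K for all eps ∈ U. -/
import Mathlib


/- Statement 10: characterization of null q-Gevrey asymptotic expansion of order 1/k. -/

/-- An open (bounded if `r < ∞`) sector centered at the origin, of radius `r`,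
with arguments ranging in `(θ1, θ2)`. -/
def planarSector (θ1 θ2 r : ℝ) : Set ℂ :=
  {z : ℂ | ∃ ρ θ : ℝ, 0 < ρ ∧ ρ < r ∧ θ1 < θ ∧ θ < θ2 ∧
    z = (ρ : ℂ) * Complex.exp ((θ : ℂ) * Complex.I)}

/-- `f : V → F` admits `Σ fn n ε^n` as q-Gevrey asymptotic expansion of order `1/kk` on `V`. -/
def qAsymp {F : Type*} [NormedAddCommGroup F] [NormedSpace ℂ F]
    (q kk : ℝ) (V : Set ℂ) (f : ℂ → F) (fn : ℕ → F) : Prop :=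
  ∀ θ1 θ2 r : ℝ, planarSector θ1 θ2 r ⊆ V →
    closure (planarSector θ1 θ2 r) ⊆ V ∪ {0} →
    ∃ A C : ℝ, 0 < A ∧ 0 < C ∧
      ∀ N : ℕ, ∀ eps ∈ planarSector θ1 θ2 r,
        ‖f eps - ∑ n ∈ Finset.range (N + 1), eps ^ n • fn n‖
          ≤ C * A ^ (N + 1) * q ^ (((N : ℝ) + 1) * N / (2 * kk)) * ‖eps‖ ^ (N + 1)

lemma quad1 (L κ b t n : ℝ) (hL : 0 < L) (hκ : 0 < κ)
    (h3 : 0 ≤ n * L + (b + t) * κ) (h4 : n * L + (b + t) * κ ≤ L) :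
    n * (b + L / (2 * κ)) + (L * (n * (n - 1) / (2 * κ)) + n * t)
      ≤ L / (2 * κ) + (-(κ / (2 * L)) * t ^ 2 + -(κ / L) * b * t) := by
  have hid : (L / (2 * κ) + (-(κ / (2 * L)) * t ^ 2 + -(κ / L) * b * t))
      - (n * (b + L / (2 * κ)) + (L * (n * (n - 1) / (2 * κ)) + n * t))
      = (L ^ 2 - (n * L + (b + t) * κ) ^ 2 + κ ^ 2 * b ^ 2) / (2 * L * κ) := by
    field_simp
    ring
  have hnum : 0 ≤ L ^ 2 - (n * L + (b + t) * κ) ^ 2 + κ ^ 2 * b ^ 2 := by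
    nlinarith [sq_nonneg (κ * b)]
  nlinarith [div_nonneg hnum (le_of_lt (by positivity : (0:ℝ) < 2 * L * κ))]

lemma key_forward (q κ A C r : ℝ) (hq : 1 < q) (hκ : 0 < κ) (hA : 0 < A)
    (hC : 0 < C) (hr : 0 < r) :
    ∃ K M : ℝ, 0 < M ∧ ∀ x : ℝ, 0 < x → x < r → ∃ N : ℕ,
      C * A ^ (N + 1) * q ^ (((N : ℝ) + 1) * N / (2 * κ)) * x ^ (N + 1)
        ≤ M * Real.exp (-(κ / (2 * Real.log q)) * Real.log x ^ 2) * x ^ K := by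
  have hq0 : (0:ℝ) < q := lt_trans one_pos hq
  set L := Real.log q with hLdef
  have hL : 0 < L := Real.log_pos hq
  set c : ℝ := Real.log A with hc
  set b : ℝ := c - L / (2 * κ) with hb
  set K : ℝ := -(κ / L) * b with hK
  set T : ℝ := max |(-b - L / κ)| |Real.log r| with hT
  have hT0 : 0 ≤ T := le_trans (abs_nonneg _) (le_max_left _ _)
  set M1 : ℝ := C * Real.exp (L / (2 * κ)) with hM1
  set M2 : ℝ := C * A * Real.exp (T + κ / (2 * L) * T ^ 2 + |K| * T) with hM2
  have hM1pos : 0 < M1 := by positivity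
  have hM2pos : 0 < M2 := by positivity
  refine ⟨K, max M1 M2, lt_max_of_lt_left hM1pos, ?_⟩
  intro x hx hxr
  set t := Real.log x with ht
  have hxe : x = Real.exp t := (Real.exp_log hx).symm
  have hxK : x ^ K = Real.exp (K * t) := by
    rw [hxe, ← Real.exp_mul]; ring_nf
  have hCe : C = Real.exp (Real.log C) := (Real.exp_log hC).symm
  have hAe : A = Real.exp c := (Real.exp_log hA).symm
  have htr : t < Real.log r := Real.log_lt_log hx hxr
  by_cases hcase : t ≤ -b - L / κ
  · -- case 1 : use N = ⌈m*⌉₊ - 1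
    set ms : ℝ := -((b + t) * κ) / L with hms
    have h5 : (b + t) * κ ≤ -L := by
      have h6 := mul_le_mul_of_nonneg_right (by linarith : b + t ≤ -(L/κ)) hκ.le
      rwa [neg_mul, div_mul_cancel₀ _ (ne_of_gt hκ)] at h6
    have hms1 : 1 ≤ ms := (le_div_iff₀ hL).mpr (by linarith)
    set n : ℕ := ⌈ms⌉₊ with hn
    have hn1 : 1 ≤ n := Nat.one_le_ceil_iff.mpr (lt_of_lt_of_le one_pos hms1)
    refine ⟨n - 1, ?_⟩
    have hcast : ((n - 1 : ℕ) : ℝ) = (n : ℝ) - 1 := by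
      push_cast [Nat.cast_sub hn1]; ring
    have h3 : 0 ≤ (n : ℝ) * L + (b + t) * κ := by
      have := (div_le_iff₀ hL).mp (Nat.le_ceil ms)
      linarith
    have h4 : (n : ℝ) * L + (b + t) * κ ≤ L := by
      have h7 : (n : ℝ) - 1 < ms := by
        have := Nat.ceil_lt_add_one (le_trans zero_le_one hms1)
        linarith
      have := (lt_div_iff₀ hL).mp h7
      linarith
    have hNn : (n - 1 : ℕ) + 1 = n := Nat.succ_pred_eq_of_pos hn1
    have hLHS : C * A ^ ((n-1) + 1) * q ^ ((((n-1:ℕ) : ℝ) + 1) * ((n-1:ℕ):ℝ) / (2 * κ)) * x ^ ((n-1) + 1)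
        = Real.exp (Real.log C + ((n:ℝ) * c + (L * ((n:ℝ) * ((n:ℝ) - 1) / (2 * κ)) + (n:ℝ) * t))) := by
      rw [hNn, Real.rpow_def_of_pos hq0, hcast, hxe, hAe, ← Real.exp_nat_mul, ← Real.exp_nat_mul,
        hCe, ← Real.exp_add, ← Real.exp_add, ← Real.exp_add]
      congr 1
      rw [Real.log_exp]
      ring
    rw [hLHS, hxK]
    have hM1le : M1 * (Real.exp (-(κ / (2 * L)) * t ^ 2) * Real.exp (K * t))
        ≤ max M1 M2 * (Real.exp (-(κ / (2 * L)) * t ^ 2) * Real.exp (K * t)) :=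
      mul_le_mul_of_nonneg_right (le_max_left _ _) (by positivity)
    rw [mul_assoc]
    refine le_trans ?_ hM1le
    rw [hM1, hCe, Real.log_exp, ← Real.exp_add, ← Real.exp_add, ← Real.exp_add]
    rw [Real.exp_le_exp]
    have hcc : c = b + L / (2 * κ) := by rw [hb]; ring
    have hquad := quad1 L κ b t (n : ℝ) hL hκ h3 h4
    rw [hcc, hK]
    linarith
  · -- case 2 : N = 0
    refine ⟨0, ?_⟩
    push_neg at hcase
    have hT1 : -T ≤ t := by
      have h11 : -T ≤ -b - L / κ := by
        have h12 := neg_abs_le (-b - L / κ)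
        have h8 : |(-b - L / κ)| ≤ T := le_max_left _ _
        linarith
      linarith
    have hT2 : t ≤ T := by
      have h8 : Real.log r ≤ |Real.log r| := le_abs_self _
      have h9 : |Real.log r| ≤ T := le_max_right _ _
      linarith
    have habs : -(|K| * T) ≤ K * t := by
      have h10 : |K * t| ≤ |K| * T := by
        rw [abs_mul]
        exact mul_le_mul_of_nonneg_left (abs_le.mpr ⟨hT1, hT2⟩) (abs_nonneg K)
      have h13 := neg_abs_le (K * t)
      linarith
    have he : ((((0:ℕ) : ℝ) + 1) * ((0:ℕ):ℝ) / (2 * κ)) = 0 := by norm_num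
    have hLHS : C * A ^ (0 + 1) * q ^ ((((0:ℕ) : ℝ) + 1) * ((0:ℕ):ℝ) / (2 * κ)) * x ^ (0 + 1)
        = C * A * Real.exp t := by
      rw [he, Real.rpow_zero, hxe]
      ring
    rw [hLHS, hxK]
    have hM2le : M2 * (Real.exp (-(κ / (2 * L)) * t ^ 2) * Real.exp (K * t))
        ≤ max M1 M2 * (Real.exp (-(κ / (2 * L)) * t ^ 2) * Real.exp (K * t)) :=
      mul_le_mul_of_nonneg_right (le_max_right _ _) (by positivity)
    rw [mul_assoc (max M1 M2)]
    refine le_trans ?_ hM2le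
    rw [hM2, mul_assoc (C * A), ← Real.exp_add, ← Real.exp_add]
    refine mul_le_mul_of_nonneg_left (Real.exp_le_exp.mpr ?_) (by positivity)
    have h14 : t ^ 2 ≤ T ^ 2 := by nlinarith
    have hsq : κ / (2 * L) * t ^ 2 ≤ κ / (2 * L) * T ^ 2 :=
      mul_le_mul_of_nonneg_left h14 (by positivity)
    linarith

lemma key_backward (q κ K M : ℝ) (hq : 1 < q) (hκ : 0 < κ) (hM : 0 < M) :
    ∃ A C : ℝ, 0 < A ∧ 0 < C ∧ ∀ (x : ℝ), 0 < x → ∀ N : ℕ,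
      M * Real.exp (-(κ / (2 * Real.log q)) * Real.log x ^ 2) * x ^ K
        ≤ C * A ^ (N + 1) * q ^ (((N : ℝ) + 1) * N / (2 * κ)) * x ^ (N + 1) := by
  have hq0 : (0:ℝ) < q := lt_trans one_pos hq
  set L := Real.log q with hLdef
  have hL : 0 < L := Real.log_pos hq
  set c : ℝ := L / (2 * κ) - K * L / κ with hc
  refine ⟨Real.exp c, M * Real.exp (K ^ 2 * L / (2 * κ)), Real.exp_pos _,
    by positivity, ?_⟩
  intro x hx N
  set t := Real.log x with ht
  set m : ℝ := (N : ℝ) + 1 with hm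
  have hxe : x = Real.exp t := (Real.exp_log hx).symm
  have hrp : q ^ (((N : ℝ) + 1) * N / (2 * κ)) = Real.exp (L * (m * (m - 1) / (2 * κ))) := by
    rw [Real.rpow_def_of_pos hq0]
    congr 1
    push_cast [hm]
    ring
  have hxK : x ^ K = Real.exp (K * t) := by
    rw [hxe, ← Real.exp_mul]; ring_nf
  have hxN : x ^ (N + 1) = Real.exp (m * t) := by
    rw [hxe, ← Real.exp_nat_mul]
    congr 1
    push_cast [hm]; ring
  have hAN : Real.exp c ^ (N + 1) = Real.exp (m * c) := by
    rw [← Real.exp_nat_mul]; congr 1; push_cast [hm]; ring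
  rw [hrp, hxK, hxN, hAN, mul_assoc, mul_assoc, mul_assoc, mul_assoc,
    ← Real.exp_add, ← Real.exp_add, ← Real.exp_add, ← Real.exp_add]
  refine mul_le_mul_of_nonneg_left (Real.exp_le_exp.mpr ?_) (le_of_lt hM)
  have hkey : (K ^ 2 * L / (2 * κ) + (m * c + (L * (m * (m - 1) / (2 * κ)) + m * t)))
      - (-(κ / (2 * L)) * t ^ 2 + K * t) = (L * (m - K) + κ * t) ^ 2 / (2 * L * κ) := by
    rw [hc]
    field_simp
    ring
  nlinarith [sq_nonneg (L * (m - K) + κ * t), div_nonneg (sq_nonneg (L * (m - K) + κ * t)) (le_of_lt (by positivity : (0:ℝ) < 2 * L * κ))]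


lemma sector_norm {a b R : ℝ} {z : ℂ} (h : z ∈ planarSector a b R) :
    0 < ‖z‖ ∧ ‖z‖ < R := by
  obtain ⟨ρ, θ, hρ, hρR, -, -, rfl⟩ := h
  have : ‖(ρ : ℂ) * Complex.exp ((θ : ℂ) * Complex.I)‖ = ρ := by
    rw [norm_mul, Complex.norm_exp_ofReal_mul_I, mul_one, Complex.norm_real,
      Real.norm_eq_abs, abs_of_pos hρ]
  rw [this]
  exact ⟨hρ, hρR⟩

theorem stmt_10 {F : Type*} [NormedAddCommGroup F] [NormedSpace ℂ F]
    (q : ℝ) (hq : 1 < q) (k : ℕ) (hk : 1 ≤ k)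
    (θ1 θ2 r : ℝ) (hθ : θ1 < θ2) (hθ2 : θ2 - θ1 ≤ 2 * Real.pi) (hr : 0 < r)
    (f : ℂ → F) (hf : DifferentiableOn ℂ f (planarSector θ1 θ2 r)) :
    qAsymp q k (planarSector θ1 θ2 r) f (fun _ => 0) ↔
      (∀ θ1' θ2' r' : ℝ, planarSector θ1' θ2' r' ⊆ planarSector θ1 θ2 r →
        closure (planarSector θ1' θ2' r') ⊆ planarSector θ1 θ2 r ∪ {0} →
        ∃ K : ℝ, ∃ M : ℝ, 0 < M ∧
          ∀ eps ∈ planarSector θ1' θ2' r',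
            ‖f eps‖ ≤ M * Real.exp (-((k : ℝ) / (2 * Real.log q)) * (Real.log ‖eps‖) ^ 2)
              * ‖eps‖ ^ K) := by
  have hκ : (0:ℝ) < (k : ℝ) := by exact_mod_cast Nat.lt_of_lt_of_le Nat.zero_lt_one hk
  constructor
  · intro h θ1' θ2' r' hsub hcl
    obtain ⟨A, C, hA, hC, hN⟩ := h θ1' θ2' r' hsub hcl
    obtain ⟨K, M, hM, hkey⟩ := key_forward q (k : ℝ) A C r hq hκ hA hC hr
    refine ⟨K, M, hM, ?_⟩
    intro eps heps
    obtain ⟨hx0, hxr⟩ := sector_norm (hsub heps)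
    obtain ⟨N, hNle⟩ := hkey ‖eps‖ hx0 hxr
    have h1 := hN N eps heps
    simp only [smul_zero, Finset.sum_const_zero, sub_zero] at h1
    exact le_trans h1 hNle
  · intro h θ1' θ2' r' hsub hcl
    obtain ⟨K, M, hM, hb⟩ := h θ1' θ2' r' hsub hcl
    obtain ⟨A, C, hA, hC, hkey⟩ := key_backward q (k : ℝ) K M hq hκ hM
    refine ⟨A, C, hA, hC, ?_⟩
    intro N eps heps
    simp only [smul_zero, Finset.sum_const_zero, sub_zero]
    exact le_trans (hb eps heps) (hkey ‖eps‖ (sector_norm heps).1 N)
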